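/- Let N ≥ 1 and let X and W be real tensors of size I₁×⋯×I_N where every entry of W is 0 or 1. Fix m ∈ {1,…,N} and matrices A^(n) ∈ ℝ^{I_n×R} for n ≠ m. Define f_{W₁}(A^(m)) = ½‖W ∗ (X − [[A^(1),…,A^(N)]])‖², where ∗ is the Hadamard (elementwise) product. Then f_{W₁} is Fréchet differentiable at every A^(m) and, for every i ∈ {1,…,I_m} and r ∈ {1,…,R}, its partial derivative with respect to a^{(m)}_{ir} equals the sum over all index tuples (i₁,…,i_N) with i_m = i of w_{i₁⋯i_N}(z_{i₁⋯i_N} − x_{i₁⋯i_N}) Π_{n≠m} a^{(n)}_{i_n r}, where z denotes the entries of [[A^(1),…,A^(N)]]. (In matricized form this is ∂f_{W₁}/∂A^(m) = (W₍ₘ₎ ∗ Z₍ₘ₎ − W₍ₘ₎ ∗ X₍ₘ₎)A^(−m).) -/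

import Mathlib

open Finset

/-- The matrix with a `1` in entry `(i,r)` and `0` elsewhere (direction for a
partial derivative with respect to entry `(i,r)`). -/
def entryDir {P R : ℕ} (i : Fin P) (r : Fin R) : Fin P → Fin R → ℝ :=
  fun i' r' => if i' = i ∧ r' = r then 1 else 0

/-- For `N`-way tensors `X` and binary `W` (`N ≥ 1`) and fixed
factor matrices `A⁽ⁿ⁾` for `n ≠ m`, the weighted objective
`f_{W₁}(A⁽ᵐ⁾) = ½‖W ∗ (X − [[A⁽¹⁾,…,A⁽ᴺ⁾]])‖²` is Fréchet differentiable at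
every `A⁽ᵐ⁾`, and its partial derivative with respect to `a⁽ᵐ⁾_{ir}` equals
the sum over all index tuples `idx` with `idx m = i` of
`w_idx (z_idx − x_idx) ∏_{n≠m} a⁽ⁿ⁾_{idx n, r}`
(the matricized formula `(W₍ₘ₎ ∗ Z₍ₘ₎ − W₍ₘ₎ ∗ X₍ₘ₎) A⁽⁻ᵐ⁾`). -/
theorem nway_weighted_cp_grad (N R : ℕ) (hN : 1 ≤ N) (I : Fin N → ℕ)
    (X W : ((n : Fin N) → Fin (I n)) → ℝ)
    (hW : ∀ idx, W idx = 0 ∨ W idx = 1) (m : Fin N)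
    (A : (n : Fin N) → Fin (I n) → Fin R → ℝ)
    (Am : Fin (I m) → Fin R → ℝ) :
    DifferentiableAt ℝ
      (fun Am' : Fin (I m) → Fin R → ℝ =>
        (1 / 2 : ℝ) * ∑ idx : (n : Fin N) → Fin (I n),
          (W idx *
            (X idx - ∑ r, Am' (idx m) r * ∏ n ∈ univ.erase m, A n (idx n) r)) ^ 2)
      Am ∧
    ∀ (i : Fin (I m)) (r : Fin R),
      fderiv ℝ
        (fun Am' : Fin (I m) → Fin R → ℝ =>
          (1 / 2 : ℝ) * ∑ idx : (n : Fin N) → Fin (I n),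
            (W idx *
              (X idx - ∑ r, Am' (idx m) r * ∏ n ∈ univ.erase m, A n (idx n) r)) ^ 2)
        Am (entryDir i r)
      = ∑ idx ∈ univ.filter (fun idx : (n : Fin N) → Fin (I n) => idx m = i),
          W idx *
            ((∑ r', Am (idx m) r' * ∏ n ∈ univ.erase m, A n (idx n) r') - X idx)
            * ∏ n ∈ univ.erase m, A n (idx n) r := by

  classical
  set c : ((n : Fin N) → Fin (I n)) → Fin R → ℝ :=
    fun idx r => ∏ n ∈ univ.erase m, A n (idx n) r with hc
  set L : ((n : Fin N) → Fin (I n)) → (Fin (I m) → Fin R → ℝ) →L[ℝ] ℝ :=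
    fun idx => ∑ r : Fin R, c idx r •
      ((ContinuousLinearMap.proj r).comp
        (ContinuousLinearMap.proj (R := ℝ) (φ := fun _ : Fin (I m) => Fin R → ℝ) (idx m)))
    with hL
  have hLapp : ∀ (idx : (n : Fin N) → Fin (I n)) (v : Fin (I m) → Fin R → ℝ),
      L idx v = ∑ r, v (idx m) r * c idx r := by
    intro idx v
    simp [hL, ContinuousLinearMap.sum_apply, mul_comm]
  have hfun : (fun Am' : Fin (I m) → Fin R → ℝ =>
        (1 / 2 : ℝ) * ∑ idx : (n : Fin N) → Fin (I n),
          (W idx *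
            (X idx - ∑ r, Am' (idx m) r * ∏ n ∈ univ.erase m, A n (idx n) r)) ^ 2)
      = fun Am' => (1 / 2 : ℝ) *
          ∑ idx : (n : Fin N) → Fin (I n), (W idx * (X idx - L idx Am')) ^ 2 := by
    funext Am'
    congr 1
    refine Finset.sum_congr rfl fun idx _ => ?_
    rw [hLapp]
  have hD : ∀ idx : (n : Fin N) → Fin (I n),
      HasFDerivAt (fun Am' => (W idx * (X idx - L idx Am')) ^ 2)
        ((((2 : ℕ) : ℝ) * (W idx * (X idx - L idx Am)) ^ 1) •
          ((W idx) • (-(L idx)))) Am := by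
    intro idx
    have h1 : HasFDerivAt (fun Am' => W idx * (X idx - L idx Am'))
        ((W idx) • (-(L idx))) Am :=
      (((L idx).hasFDerivAt (x := Am)).const_sub (X idx)).const_mul (W idx)
    have h2 := h1.mul h1
    have heq : (fun Am' => (W idx * (X idx - L idx Am')) ^ 2)
        = fun Am' => (W idx * (X idx - L idx Am')) * (W idx * (X idx - L idx Am')) := by
      funext x; ring
    rw [heq]
    refine h2.congr_fderiv ?_
    rw [pow_one, Nat.cast_ofNat, two_mul, add_smul]
  have hsum : HasFDerivAt
      (fun Am' => (1 / 2 : ℝ) *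
        ∑ idx : (n : Fin N) → Fin (I n), (W idx * (X idx - L idx Am')) ^ 2)
      ((1 / 2 : ℝ) • ∑ idx : (n : Fin N) → Fin (I n),
        ((((2 : ℕ) : ℝ) * (W idx * (X idx - L idx Am)) ^ 1) •
          ((W idx) • (-(L idx))))) Am :=
    (HasFDerivAt.fun_sum (fun idx _ => hD idx)).const_mul (1 / 2)
  rw [hfun]
  refine ⟨hsum.differentiableAt, fun i r => ?_⟩
  rw [hsum.fderiv]
  have hLe : ∀ idx : (n : Fin N) → Fin (I n),
      L idx (entryDir i r) = if idx m = i then c idx r else 0 := by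
    intro idx
    rw [hLapp]
    by_cases h : idx m = i
    · simp [h, entryDir]
    · simp [h, entryDir]
  rw [Finset.sum_filter]
  simp only [ContinuousLinearMap.smul_apply, ContinuousLinearMap.sum_apply,
    ContinuousLinearMap.neg_apply, hLe, smul_eq_mul, Finset.mul_sum]
  refine Finset.sum_congr rfl fun idx _ => ?_
  have hW2 : W idx * W idx = W idx := by rcases hW idx with h | h <;> simp [h]
  by_cases h : idx m = i
  · subst h
    rw [if_pos rfl,
      show (∑ r', Am (idx m) r' * ∏ n ∈ univ.erase m, A n (idx n) r') = L idx Am from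
        (hLapp idx Am).symm,
      show (∏ n ∈ univ.erase m, A n (idx n) r) = c idx r from rfl, pow_one]
    push_cast
    rw [if_pos rfl]
    linear_combination ((L idx Am - X idx) * c idx r) * hW2
  · simp [h]
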